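/- arXiv:2603.23930 — 3 statements merged into one kernel-verified Lean document; each statement's English description precedes it below -/
import Mathlib

section
/- With u and v defined as above, one has u^{q−1} = λ·(v^q − v). -/
/-- Let `q` be a prime power, `E` a field containing a subfield `Fq` with `q` elements,
`λ ∈ Fq` nonzero, and `x, y ∈ E` with `w = y^q + x*y` nonzero and `w^(q-1) + x = 0`.
With `u = w⁻¹` and `v = y * (λ*w)⁻¹`, one has `u^(q-1) = λ * (v^q - v)`. -/
theorem cyclotomic_stmt3
    (q : ℕ) (hq : IsPrimePow q)
    (E : Type*) [Field E] (Fq : Subfield E) (hFq : Nat.card Fq = q)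
    (lam x y w u v : E)
    (hlam : lam ∈ Fq) (hlam0 : lam ≠ 0)
    (hw : w = y ^ q + x * y) (hw0 : w ≠ 0)
    (hrel : w ^ (q - 1) + x = 0)
    (hu : u = w⁻¹) (hv : v = y * (lam * w)⁻¹) :
    u ^ (q - 1) = lam * (v ^ q - v) := by
  have hq1 : 1 ≤ q := hq.one_lt.le
  have hfin : Finite Fq := Nat.finite_of_card_ne_zero (by omega)
  haveI : Fintype Fq := Fintype.ofFinite _
  have hcard : Fintype.card Fq = q := by rw [← Nat.card_eq_fintype_card, hFq]
  have hlq : lam ^ q = lam := by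
    have h := FiniteField.pow_card (⟨lam, hlam⟩ : Fq)
    rw [hcard] at h
    simpa using congrArg Subtype.val h
  have hx : x = -(w ^ (q - 1)) := by linear_combination hrel
  have hwq : w ^ q = w ^ (q - 1) * w := by
    rw [← pow_succ, Nat.sub_add_cancel hq1]
  -- lam * v = y / w
  have h1 : lam * v = y * w⁻¹ := by
    rw [hv, mul_inv]
    field_simp
  -- lam * v^q = y^q / w^q
  have h2 : lam * v ^ q = y ^ q * (w ^ q)⁻¹ := by
    rw [hv, mul_inv, mul_pow, mul_pow, inv_pow, inv_pow, hlq]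
    field_simp
  have key : lam * (v ^ q - v) = (y ^ q + x * y) * (w ^ q)⁻¹ := by
    rw [mul_sub, h1, h2, hx, hwq]
    field_simp
    ring
  rw [key, ← hw, hu, hwq]
  field_simp
  rw [← mul_pow, one_div, inv_mul_cancel₀ hw0, one_pow]
end

section
/- With u and v defined as above, the subfield of E generated by 𝔽_q ∪ {x, y} is equal to the subfield of E generated by 𝔽_q ∪ {u, v}. (In particular, the cyclotomic function field L(Λ_{x²}) = 𝔽_q(x, y) is 𝔽_q-isomorphic to the function field 𝔽_q(u, v) defined by u^{q−1} = λ·(v^q − v).) -/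
/-- Let `q` be a prime power, `E` a field containing a subfield `Fq` with `q` elements,
`λ ∈ Fq` nonzero, and `x, y ∈ E` with `w = y^q + x*y` nonzero and `w^(q-1) + x = 0`.
With `u = w⁻¹` and `v = y * (λ*w)⁻¹`, the subfield of `E` generated by `Fq ∪ {x, y}`
equals the subfield generated by `Fq ∪ {u, v}`. -/
theorem cyclotomic_stmt4
    (q : ℕ) (hq : IsPrimePow q)
    (E : Type*) [Field E] (Fq : Subfield E) (hFq : Nat.card Fq = q)
    (lam x y w u v : E)
    (hlam : lam ∈ Fq) (hlam0 : lam ≠ 0)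
    (hw : w = y ^ q + x * y) (hw0 : w ≠ 0)
    (hrel : w ^ (q - 1) + x = 0)
    (hu : u = w⁻¹) (hv : v = y * (lam * w)⁻¹) :
    Subfield.closure ((Fq : Set E) ∪ {x, y}) =
      Subfield.closure ((Fq : Set E) ∪ {u, v}) := by
  set K1 := Subfield.closure ((Fq : Set E) ∪ {x, y}) with hK1
  set K2 := Subfield.closure ((Fq : Set E) ∪ {u, v}) with hK2
  have hxK1 : x ∈ K1 := Subfield.subset_closure (Or.inr (Or.inl rfl))
  have hyK1 : y ∈ K1 := Subfield.subset_closure (Or.inr (Or.inr rfl))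
  have huK2 : u ∈ K2 := Subfield.subset_closure (Or.inr (Or.inl rfl))
  have hvK2 : v ∈ K2 := Subfield.subset_closure (Or.inr (Or.inr rfl))
  have hlK1 : lam ∈ K1 := Subfield.subset_closure (Or.inl hlam)
  have hlK2 : lam ∈ K2 := Subfield.subset_closure (Or.inl hlam)
  have hwK1 : w ∈ K1 := by
    rw [hw]; exact K1.add_mem (K1.pow_mem hyK1 q) (K1.mul_mem hxK1 hyK1)
  have hwK2 : w ∈ K2 := by
    have : w = u⁻¹ := by rw [hu, inv_inv]
    rw [this]; exact K2.inv_mem huK2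
  apply le_antisymm <;> rw [Subfield.closure_le] <;>
    refine Set.union_subset (fun a ha => Subfield.subset_closure (Or.inl ha)) ?_
  · rintro a (rfl | rfl)
    · have : a = -(w ^ (q - 1)) := by linear_combination hrel
      rw [this]; exact K2.neg_mem (K2.pow_mem hwK2 _)
    · have : a = v * (lam * w) := by
        rw [hv]; field_simp
      rw [this]; exact K2.mul_mem hvK2 (K2.mul_mem hlK2 hwK2)
  · rintro a (rfl | rfl)
    · rw [hu]; exact K1.inv_mem hwK1
    · rw [hv]; exact K1.mul_mem hyK1 (K1.inv_mem (K1.mul_mem hlK1 hwK1))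
end

section
/- There exist an element u ∈ E and a nonzero μ ∈ 𝔽_q such that u^{q−1} = μ·(v^q − v) and the subfield of E generated by 𝔽_q ∪ {v, y} equals the subfield of E generated by 𝔽_q ∪ {v, u}. (This is the reduction step in the proof of the main theorem: any Kummer extension y^{q−1} = λ(v^q − v)^n with gcd(n, q−1) = 1 is the same field as one given by u^{q−1} = μ(v^q − v).) -/
/-- Bezout in ℕ for coprime numbers, via Euler's theorem. -/
lemma bezout_nat (n d : ℕ) (hn : 0 < n) (hd : 0 < d) (hcop : Nat.gcd n d = 1) :
    ∃ a b : ℕ, a * n = 1 + b * d := by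
  have hφ : 0 < d.totient := Nat.totient_pos.mpr hd
  have he : n ^ d.totient ≡ 1 [MOD d] := Nat.ModEq.pow_totient hcop
  have h1 : 1 ≤ n ^ d.totient := Nat.one_le_pow _ _ hn
  have hdvd : d ∣ n ^ d.totient - 1 := (Nat.modEq_iff_dvd' h1).mp he.symm
  obtain ⟨b, hb⟩ := hdvd
  refine ⟨n ^ (d.totient - 1), b, ?_⟩
  have h2 : n ^ (d.totient - 1) * n = n ^ d.totient := by
    rw [← pow_succ]
    congr 1
    omega
  rw [h2, mul_comm b d, ← hb]
  omega

/-- Let `q` be a prime power, `E` a field containing a subfield `Fq` with `q` elements,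
`λ ∈ Fq` nonzero, `n` a positive integer coprime to `q - 1`, and `v, y ∈ E` with `y ≠ 0`
and `y^(q-1) = λ * (v^q - v)^n`.  Then there exist `u ∈ E` and a nonzero `μ ∈ Fq` with
`u^(q-1) = μ * (v^q - v)` and the subfield of `E` generated by `Fq ∪ {v, y}` equals the
subfield generated by `Fq ∪ {v, u}`. -/
theorem cyclotomic_stmt7
    (q : ℕ) (hq : IsPrimePow q)
    (E : Type*) [Field E] (Fq : Subfield E) (hFq : Nat.card Fq = q)
    (lam : E) (hlam : lam ∈ Fq) (hlam0 : lam ≠ 0)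
    (n : ℕ) (hn : 0 < n) (hcop : Nat.gcd n (q - 1) = 1)
    (v y : E) (hy0 : y ≠ 0)
    (hrel : y ^ (q - 1) = lam * (v ^ q - v) ^ n) :
    ∃ u μ : E, μ ∈ Fq ∧ μ ≠ 0 ∧ u ^ (q - 1) = μ * (v ^ q - v) ∧
      Subfield.closure ((Fq : Set E) ∪ {v, y}) =
        Subfield.closure ((Fq : Set E) ∪ {v, u}) := by
  have hq2 : 2 ≤ q := hq.two_le
  set d := q - 1 with hdq
  have hd : 0 < d := by omega
  obtain ⟨a, b, hab⟩ := bezout_nat n d hn hd hcop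
  set w : E := v ^ q - v with hwdef
  have hw : w ≠ 0 := by
    intro h
    apply pow_ne_zero d hy0
    rw [hrel, h, zero_pow hn.ne', mul_zero]
  set u : E := y ^ a * (w ^ b)⁻¹ with hu
  have hyd : y ^ d = lam * w ^ n := hrel
  -- key computation: y ^ (a * n)
  have hyan : y ^ (a * n) = y * lam ^ b * w ^ (n * b) := by
    rw [hab, pow_add, pow_one, mul_comm b d, pow_mul, hyd, mul_pow, ← pow_mul]
    ring
  have hun : u ^ n = y * lam ^ b := by
    have hwb : (w ^ (b * n)) ≠ 0 := pow_ne_zero _ hw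
    rw [hu, mul_pow, ← pow_mul, ← inv_pow, ← pow_mul, hyan]
    rw [mul_comm n b]
    field_simp
    rw [← mul_pow, mul_one_div_cancel hw, one_pow]
  have hud : u ^ d = lam ^ a * w := by
    have : y ^ (a * d) = lam ^ a * w * w ^ (b * d) := by
      rw [mul_comm a d, pow_mul, hyd, mul_pow, ← pow_mul, mul_comm n a, hab, pow_add, pow_one]
      ring
    rw [hu, mul_pow, ← pow_mul, ← inv_pow, ← pow_mul, this]
    field_simp
    rw [← mul_pow, mul_one_div_cancel hw, one_pow]
  refine ⟨u, lam ^ a, Fq.pow_mem hlam a, pow_ne_zero a hlam0, hud, ?_⟩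
  -- closure equality
  apply le_antisymm
  · apply Subfield.closure_le.mpr
    rintro x (hx | hx)
    · exact Subfield.subset_closure (Or.inl hx)
    · rcases hx with rfl | hx
      · exact Subfield.subset_closure (Or.inr (Or.inl rfl))
      · rcases hx with rfl
        -- y = u ^ n * (lam ^ b)⁻¹
        have hy : x = u ^ n * (lam ^ b)⁻¹ := by
          rw [hun]
          field_simp
        rw [hy]
        have hu_mem : u ∈ Subfield.closure ((Fq : Set E) ∪ {v, u}) :=
          Subfield.subset_closure (Or.inr (Or.inr rfl))
        have hlam_mem : lam ∈ Subfield.closure ((Fq : Set E) ∪ {v, u}) :=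
          Subfield.subset_closure (Or.inl hlam)
        exact mul_mem (pow_mem hu_mem n) (inv_mem (pow_mem hlam_mem b))
  · apply Subfield.closure_le.mpr
    rintro x (hx | hx)
    · exact Subfield.subset_closure (Or.inl hx)
    · rcases hx with rfl | hx
      · exact Subfield.subset_closure (Or.inr (Or.inl rfl))
      · rcases hx with rfl
        -- u = y ^ a * (w ^ b)⁻¹
        have hv_mem : v ∈ Subfield.closure ((Fq : Set E) ∪ {v, y}) :=
          Subfield.subset_closure (Or.inr (Or.inl rfl))
        have hy_mem : y ∈ Subfield.closure ((Fq : Set E) ∪ {v, y}) :=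
          Subfield.subset_closure (Or.inr (Or.inr rfl))
        have hw_mem : w ∈ Subfield.closure ((Fq : Set E) ∪ {v, y}) :=
          sub_mem (pow_mem hv_mem q) hv_mem
        exact mul_mem (pow_mem hy_mem a) (inv_mem (pow_mem hw_mem b))
end
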